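/- Let q, t > 1 be real numbers and k ≥ 1 an integer. Define f on partitions of k by f(ρ) = (−1)^{k−ℓ(ρ)}·∏_{j=1}^{ℓ(ρ)} (1−q^{ρ_j})/(1−t^{ρ_j}). Then f is a right eigenfunction of the auxiliary variables kernel M with eigenvalue β = ((q−1)·(1−t^{−k}))/((q^k−1)·(1−t^{−1})); that is, for every partition ρ of k, Σ_{ν⊢k} M(ρ,ν)·f(ν) = β·f(ρ). (This is the case λ = (1^k) of the spectral theorem for M, using the closed form of the power-sum coefficients X_ρ^{(1^k)} of the Macdonald polynomial.) -/

import Mathlib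

set_option maxHeartbeats 1600000

open Finset

/-- `z_λ = ∏_i i^{a_i(λ)} a_i(λ)!` for a multiset of parts. -/
def zWeight (m : Multiset ℕ) : ℕ :=
  ∏ i ∈ m.toFinset, i ^ m.count i * (m.count i).factorial

/-- `(x,y)_k = ∏_{i=0}^{k-1} (1 - x y^i)`. -/
noncomputable def poch (x y : ℝ) (k : ℕ) : ℝ :=
  ∏ i ∈ Finset.range k, (1 - x * y ^ i)

/-- The measure `π_{q,t}` on partitions of `k`. -/
noncomputable def piQT (q t : ℝ) (k : ℕ) (l : Nat.Partition k) : ℝ :=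
  (poch q q k / poch t q k) * ((zWeight l.parts : ℝ))⁻¹ *
    (l.parts.map (fun p => (1 - t ^ p) / (1 - q ^ p))).prod

/-- `π_{∞,t}` evaluated on a multiset of parts. -/
noncomputable def piInf (t : ℝ) (m : Multiset ℕ) : ℝ :=
  (t / (t - 1)) * ((zWeight m : ℝ))⁻¹ * (m.map (fun p => 1 - t⁻¹ ^ p)).prod

/-- The weight `w_λ(κ)` of choosing the sub-multiset `κ` of kept parts. -/
noncomputable def wKeep (q : ℝ) (k : ℕ) (l κ : Multiset ℕ) : ℝ :=
  (q ^ k - 1)⁻¹ * ∏ i ∈ Finset.Icc 1 k,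
    (Nat.choose (l.count i) (κ.count i) : ℝ) * (q ^ i - 1) ^ (l.count i - κ.count i)

/-- The auxiliary variables Markov kernel on partitions of `k`. -/
noncomputable def auxM (q t : ℝ) (k : ℕ) (l ν : Nat.Partition k) : ℝ :=
  ∑ κ ∈ l.parts.powerset.toFinset.filter (fun κ => κ ≤ ν.parts ∧ κ ≠ l.parts),
    wKeep q k l.parts κ * piInf t (ν.parts - κ)

lemma multiset_card_le_sum (m : Multiset ℕ) (h : ∀ x ∈ m, 1 ≤ x) :
    Multiset.card m ≤ m.sum := by
  induction m using Multiset.induction_on with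
  | empty => simp
  | cons a s ih =>
    simp only [Multiset.card_cons, Multiset.sum_cons]
    have ha : 1 ≤ a := h a (Multiset.mem_cons_self a s)
    have := ih (fun x hx => h x (Multiset.mem_cons_of_mem hx))
    omega

lemma neg_one_pow_sub (a b : ℕ) (h : b ≤ a) :
    ((-1 : ℝ)) ^ (a - b) = (-1) ^ a * (-1) ^ b := by
  have : ((-1 : ℝ)) ^ (a - b) * (-1) ^ b = (-1) ^ a := by
    rw [← pow_add, Nat.sub_add_cancel h]
  have hb : ((-1 : ℝ)) ^ b * (-1) ^ b = 1 := by
    rw [← pow_add, Even.neg_one_pow ⟨b, (two_mul b).symm ▸ rfl⟩]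
  calc ((-1:ℝ)) ^ (a-b) = ((-1:ℝ)) ^ (a-b) * ((-1)^b * (-1)^b) := by rw [hb, mul_one]
    _ = ((-1:ℝ)) ^ (a-b) * (-1)^b * (-1)^b := by ring
    _ = (-1)^a * (-1)^b := by rw [this]

lemma zWeight_cons (a : ℕ) (m : Multiset ℕ) :
    zWeight (a ::ₘ m) = a * (m.count a + 1) * zWeight m := by
  unfold zWeight
  rw [Multiset.toFinset_cons]
  by_cases ha : a ∈ m.toFinset
  · rw [Finset.insert_eq_self.2 ha]
    rw [← Finset.mul_prod_erase _ _ ha, ← Finset.mul_prod_erase _ _ ha]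
    have h1 : (a ::ₘ m).count a = m.count a + 1 := Multiset.count_cons_self a m
    have h2 : ∀ i ∈ m.toFinset.erase a, (a ::ₘ m).count i = m.count i := by
      intro i hi
      rw [Multiset.count_cons_of_ne (Finset.ne_of_mem_erase hi) m]
    rw [Finset.prod_congr rfl (fun i hi => by rw [h2 i hi]), h1]
    rw [Nat.factorial_succ]
    ring
  · have hcount : m.count a = 0 := by
      simpa [Multiset.count_eq_zero] using fun hc => ha (Multiset.mem_toFinset.2 hc)
    rw [Finset.prod_insert ha]
    have h1 : (a ::ₘ m).count a = 1 := by
      rw [Multiset.count_cons_self, hcount]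
    have h2 : ∀ i ∈ m.toFinset, (a ::ₘ m).count i = m.count i := by
      intro i hi
      exact Multiset.count_cons_of_ne (fun he => ha (by rwa [he] at hi)) m
    rw [Finset.prod_congr rfl (fun i hi => by rw [h2 i hi]), h1, hcount]
    simp

lemma zWeight_pos (m : Multiset ℕ) (h : 0 ∉ m) : 0 < zWeight m := by
  unfold zWeight
  apply Finset.prod_pos
  intro i hi
  have hipos : 0 < i := by
    rcases Nat.eq_zero_or_pos i with h1 | h1
    · exact absurd (h1 ▸ Multiset.mem_toFinset.1 hi) h
    · exact h1
  exact Nat.mul_pos (Nat.pow_pos hipos) (Nat.factorial_pos _)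

lemma count_powerset (s : Multiset ℕ) :
    ∀ (κ : Multiset ℕ) (S : Finset ℕ), s.toFinset ⊆ S → κ.toFinset ⊆ S →
    s.powerset.count κ = ∏ i ∈ S, (s.count i).choose (κ.count i) := by
  induction s using Multiset.induction_on with
  | empty =>
    intro κ S hs hκ
    rw [Multiset.powerset_zero]
    by_cases h : κ = 0
    · subst h; simp
    · have : Multiset.count κ {0} = 0 := by
        rw [Multiset.count_eq_zero]
        intro hmem
        exact h (by simpa using hmem)
      rw [this]
      obtain ⟨a, ha⟩ := Multiset.exists_mem_of_ne_zero h
      refine (Finset.prod_eq_zero (hκ (Multiset.mem_toFinset.2 ha)) ?_).symm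
      have h1 : 1 ≤ κ.count a := Multiset.one_le_count_iff_mem.2 ha
      have h0 : Multiset.count a (0 : Multiset ℕ) = 0 := Multiset.count_zero a
      rw [h0, Nat.choose_eq_zero_of_lt (by omega)]
  | cons a s ih =>
    intro κ S hs hκ
    have haS : a ∈ S := hs (by simp)
    have hsS : s.toFinset ⊆ S := fun i hi =>
      hs (by rw [Multiset.toFinset_cons]; exact Finset.mem_insert_of_mem hi)
    rw [Multiset.powerset_cons, Multiset.count_add]
    have hinj : Function.Injective (a ::ₘ · : Multiset ℕ → Multiset ℕ) :=
      fun x y h => (Multiset.cons_inj_right a).1 h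
    -- split RHS at a
    rw [← Finset.mul_prod_erase S _ haS]
    have hca : (a ::ₘ s).count a = s.count a + 1 := Multiset.count_cons_self a s
    have hci : ∀ i ∈ S.erase a, (a ::ₘ s).count i = s.count i := fun i hi =>
      Multiset.count_cons_of_ne (Finset.ne_of_mem_erase hi) s
    rw [Finset.prod_congr rfl (fun i hi => by rw [hci i hi]), hca]
    by_cases haκ : a ∈ κ
    · -- κ = a ::ₘ κ.erase a
      have hκe : a ::ₘ κ.erase a = κ := Multiset.cons_erase haκ
      have h2 : (Multiset.map (a ::ₘ ·) s.powerset).count κ = s.powerset.count (κ.erase a) := by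
        conv_lhs => rw [← hκe]
        exact Multiset.count_map_eq_count' _ _ hinj _
      have hκeS : (κ.erase a).toFinset ⊆ S := fun i hi =>
        hκ (Multiset.mem_toFinset.2 (Multiset.mem_of_mem_erase (Multiset.mem_toFinset.1 hi)))
      rw [h2, ih κ S hsS hκ, ih (κ.erase a) S hsS hκeS]
      rw [← Finset.mul_prod_erase S (fun i => (s.count i).choose (κ.count i)) haS,
        ← Finset.mul_prod_erase S (fun i => (s.count i).choose ((κ.erase a).count i)) haS]
      have he1 : (κ.erase a).count a = κ.count a - 1 := by
        rw [Multiset.count_erase_self]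
      have he2 : ∀ i ∈ S.erase a, (κ.erase a).count i = κ.count i := fun i hi =>
        Multiset.count_erase_of_ne (Finset.ne_of_mem_erase hi) _
      have hprod : ∏ i ∈ S.erase a,
          (Multiset.count i s).choose (Multiset.count i (κ.erase a)) =
          ∏ i ∈ S.erase a, (Multiset.count i s).choose (Multiset.count i κ) :=
        Finset.prod_congr rfl (fun i hi => by rw [he2 i hi])
      rw [hprod, he1]
      have hκa : 1 ≤ κ.count a := Multiset.one_le_count_iff_mem.2 haκ
      obtain ⟨e, he⟩ : ∃ e, κ.count a = e + 1 := ⟨κ.count a - 1, by omega⟩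
      rw [he]
      simp only [Nat.add_sub_cancel]
      rw [Nat.choose_succ_succ']
      ring
    · have h2 : (Multiset.map (a ::ₘ ·) s.powerset).count κ = 0 := by
        rw [Multiset.count_eq_zero]
        intro hmem
        obtain ⟨κ', _, hκ'⟩ := Multiset.mem_map.1 hmem
        exact haκ (hκ' ▸ Multiset.mem_cons_self a κ')
      have hκa : κ.count a = 0 := by
        rw [Multiset.count_eq_zero]; exact haκ
      rw [h2, ih κ S hsS hκ, ← Finset.mul_prod_erase S
        (fun i => (s.count i).choose (κ.count i)) haS, hκa]
      simp

lemma powerset_weighted_sum (u v : ℕ → ℝ) (s : Multiset ℕ) :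
    ((s.powerset.map (fun κ => (κ.map v).prod * ((s - κ).map u).prod)).sum) =
      (s.map (fun p => u p + v p)).prod := by
  induction s using Multiset.induction_on with
  | empty => simp
  | cons a s ih =>
    rw [Multiset.powerset_cons, Multiset.map_add, Multiset.sum_add, Multiset.map_map]
    have h1 : (s.powerset.map (fun κ => (κ.map v).prod * ((a ::ₘ s - κ).map u).prod)).sum
        = u a * (s.powerset.map (fun κ => (κ.map v).prod * ((s - κ).map u).prod)).sum := by
      rw [← Multiset.sum_map_mul_left]
      congr 1
      apply Multiset.map_congr rfl
      intro κ hκ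
      rw [Multiset.cons_sub_of_le a (Multiset.mem_powerset.1 hκ), Multiset.map_cons,
        Multiset.prod_cons]
      ring
    have h2 : (s.powerset.map ((fun κ => (κ.map v).prod * ((a ::ₘ s - κ).map u).prod) ∘
        (a ::ₘ ·))).sum
        = v a * (s.powerset.map (fun κ => (κ.map v).prod * ((s - κ).map u).prod)).sum := by
      rw [← Multiset.sum_map_mul_left]
      congr 1
      apply Multiset.map_congr rfl
      intro κ hκ
      simp only [Function.comp_apply]
      have : a ::ₘ s - (a ::ₘ κ) = s - κ := by
        rw [Multiset.sub_cons, Multiset.erase_cons_head]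
      rw [this, Multiset.map_cons, Multiset.prod_cons]
      ring
    rw [h1, h2, Multiset.map_cons, Multiset.prod_cons, ih]
    ring

lemma prod_pow_count (m : Multiset ℕ) (S : Finset ℕ) (h : m.toFinset ⊆ S) (f : ℕ → ℝ) :
    ∏ i ∈ S, f i ^ m.count i = (m.map f).prod := by
  rw [Finset.prod_multiset_map_count]
  exact (Finset.prod_subset h (fun x _ hx => by
    rw [Multiset.count_eq_zero.2 (fun hm => hx (Multiset.mem_toFinset.2 hm)), pow_zero])).symm

/-- Bijection sum: partitions of `n` whose parts contain `κ` correspond to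
partitions of `n - κ.sum`. -/

lemma sum_partition_sub (n : ℕ) (κ : Multiset ℕ) (hκpos : ∀ x ∈ κ, 0 < x)
    (hκn : κ.sum ≤ n) (g : Multiset ℕ → ℝ) :
    (∑ ν : Nat.Partition n, if κ ≤ ν.parts then g ν.parts else 0)
      = ∑ μ : Nat.Partition (n - κ.sum), g (μ.parts + κ) := by
  rw [← Finset.sum_filter]
  refine Finset.sum_bij' (fun ν hν => ⟨ν.parts - κ, ?_, ?_⟩)
    (fun μ _ => ⟨μ.parts + κ, ?_, ?_⟩) ?_ ?_ ?_ ?_ ?_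
  · intro i hi
    exact ν.parts_pos (Multiset.mem_of_le (Multiset.sub_le_self _ _) hi)
  · have hle : κ ≤ ν.parts := (Finset.mem_filter.1 hν).2
    have := congrArg Multiset.sum (tsub_add_cancel_of_le hle)
    rw [Multiset.sum_add, ν.parts_sum] at this
    omega
  · intro i hi
    rcases Multiset.mem_add.1 hi with h1 | h1
    · exact μ.parts_pos h1
    · exact hκpos i h1
  · rw [Multiset.sum_add, μ.parts_sum]
    omega
  · intro ν hν
    exact Finset.mem_univ _
  · intro μ hμ
    simp only [Finset.mem_filter, Finset.mem_univ, true_and]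
    exact Multiset.le_add_left κ μ.parts
  · intro ν hν
    apply Nat.Partition.ext
    simp only
    exact tsub_add_cancel_of_le (Finset.mem_filter.1 hν).2
  · intro μ hμ
    apply Nat.Partition.ext
    simp only
    simp
  · intro ν hν
    simp only
    rw [tsub_add_cancel_of_le (Finset.mem_filter.1 hν).2]

noncomputable def FF (q t : ℝ) (n : ℕ) : ℝ :=
  ∑ μ : Nat.Partition n,
    ((zWeight μ.parts : ℝ))⁻¹ * (μ.parts.map (fun p => t⁻¹ ^ p * (1 - q ^ p))).prod

lemma partition_zero_parts (μ : Nat.Partition 0) : μ.parts = 0 := by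
  by_contra h
  obtain ⟨a, ha⟩ := Multiset.exists_mem_of_ne_zero h
  have h1 : 0 < a := μ.parts_pos ha
  have h2 : a ≤ μ.parts.sum := Multiset.single_le_sum (fun x _ => Nat.zero_le x) a ha
  rw [μ.parts_sum] at h2
  omega

lemma FF_zero (q t : ℝ) : FF q t 0 = 1 := by
  unfold FF
  have hP : ∀ μ : Nat.Partition 0,
      ((zWeight μ.parts : ℝ))⁻¹ * (μ.parts.map (fun p => t⁻¹ ^ p * (1 - q ^ p))).prod = 1 := by
    intro μ
    rw [partition_zero_parts μ]
    simp [zWeight]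
  rw [Finset.sum_congr rfl (fun μ _ => hP μ)]
  simp

lemma parts_toFinset_subset (n : ℕ) (μ : Nat.Partition n) : μ.parts.toFinset ⊆ Finset.Icc 1 n := by
  intro i hi
  have hmem := Multiset.mem_toFinset.1 hi
  have h1 := μ.parts_pos hmem
  have h2 : i ≤ μ.parts.sum := Multiset.single_le_sum (fun x _ => Nat.zero_le x) i hmem
  rw [μ.parts_sum] at h2
  exact Finset.mem_Icc.2 ⟨h1, h2⟩

lemma FF_rec (q t : ℝ) (n : ℕ) :
    (n : ℝ) * FF q t n
      = ∑ r ∈ Finset.Icc 1 n, (t⁻¹ ^ r * (1 - q ^ r)) * FF q t (n - r) := by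
  classical
  set x : ℕ → ℝ := fun p => t⁻¹ ^ p * (1 - q ^ p) with hx
  set W : Multiset ℕ → ℝ := fun m => ((zWeight m : ℝ))⁻¹ * (m.map x).prod with hW
  have step1 : (n : ℝ) * FF q t n
      = ∑ μ : Nat.Partition n, ∑ r ∈ Finset.Icc 1 n,
          ((r * μ.parts.count r : ℕ) : ℝ) * W μ.parts := by
    rw [FF, Finset.mul_sum]
    refine Finset.sum_congr rfl (fun μ _ => ?_)
    have hsum : ∑ r ∈ Finset.Icc 1 n, r * μ.parts.count r = n := by
      have h1 : μ.parts.sum = ∑ r ∈ μ.parts.toFinset, μ.parts.count r • r := by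
        conv_lhs => rw [← Multiset.map_id μ.parts]
        exact Finset.sum_multiset_map_count _ _
      have h2 : ∑ r ∈ Finset.Icc 1 n, r * μ.parts.count r
          = ∑ r ∈ μ.parts.toFinset, r * μ.parts.count r := by
        refine (Finset.sum_subset (parts_toFinset_subset n μ) (fun r _ hr => ?_)).symm
        rw [Multiset.count_eq_zero.2 (fun hm => hr (Multiset.mem_toFinset.2 hm)), mul_zero]
      rw [h2]
      calc ∑ r ∈ μ.parts.toFinset, r * μ.parts.count r
          = ∑ r ∈ μ.parts.toFinset, μ.parts.count r • r :=
            Finset.sum_congr rfl (fun r _ => by rw [smul_eq_mul]; ring)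
        _ = μ.parts.sum := h1.symm
        _ = n := μ.parts_sum
    have hcast : (n : ℝ) = ∑ r ∈ Finset.Icc 1 n, ((r * μ.parts.count r : ℕ) : ℝ) := by
      exact_mod_cast congrArg (Nat.cast : ℕ → ℝ) hsum.symm
    rw [hcast, Finset.sum_mul]
  rw [step1, Finset.sum_comm]
  refine Finset.sum_congr rfl (fun r hr => ?_)
  obtain ⟨hr1, hr2⟩ := Finset.mem_Icc.1 hr
  have step2 : ∀ μ : Nat.Partition n,
      ((r * μ.parts.count r : ℕ) : ℝ) * W μ.parts
        = if ({r} : Multiset ℕ) ≤ μ.parts then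
            ((r * μ.parts.count r : ℕ) : ℝ) * W μ.parts else 0 := by
    intro μ
    by_cases h : ({r} : Multiset ℕ) ≤ μ.parts
    · rw [if_pos h]
    · rw [if_neg h]
      have : r ∉ μ.parts := fun hm => h (Multiset.singleton_le.2 hm)
      rw [Multiset.count_eq_zero.2 this]
      simp
  rw [Finset.sum_congr rfl (fun μ _ => step2 μ)]
  have hsing : ({r} : Multiset ℕ).sum = r := by simp
  have hbij := sum_partition_sub n {r} (fun y hy => by
      rw [Multiset.mem_singleton.1 hy]; omega) (by rw [hsing]; omega)
      (fun m => ((r * m.count r : ℕ) : ℝ) * W m)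
  rw [hbij, hsing, FF, Finset.mul_sum]
  refine Finset.sum_congr rfl (fun μ _ => ?_)
  have hcons : μ.parts + {r} = r ::ₘ μ.parts := by
    rw [add_comm, Multiset.singleton_add]
  rw [hcons]
  have hz : zWeight (r ::ₘ μ.parts) = r * (μ.parts.count r + 1) * zWeight μ.parts :=
    zWeight_cons r μ.parts
  have hzpos : 0 < zWeight μ.parts :=
    zWeight_pos _ (fun h0 => by have := μ.parts_pos h0; omega)
  have hcount : (r ::ₘ μ.parts).count r = μ.parts.count r + 1 := Multiset.count_cons_self _ _
  rw [hW]
  simp only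
  rw [hcount, hz, Multiset.map_cons, Multiset.prod_cons]
  have hrz : ((r * (μ.parts.count r + 1) * zWeight μ.parts : ℕ) : ℝ) ≠ 0 := by
    push_cast
    have : (0:ℝ) < zWeight μ.parts := by exact_mod_cast hzpos
    positivity
  push_cast at hrz ⊢
  calc (↑r * (↑(Multiset.count r μ.parts) + 1)) *
        ((↑r * (↑(Multiset.count r μ.parts) + 1) * (zWeight μ.parts : ℝ))⁻¹ *
          (x r * (μ.parts.map x).prod))
      = ((↑r * (↑(Multiset.count r μ.parts) + 1)) *
          (↑r * (↑(Multiset.count r μ.parts) + 1))⁻¹) *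
          ((zWeight μ.parts : ℝ)⁻¹ * (x r * (μ.parts.map x).prod)) := by
        rw [mul_inv]; ring
    _ = x r * ((zWeight μ.parts : ℝ))⁻¹ * (μ.parts.map x).prod := by
        rw [mul_inv_cancel₀ (by intro h0; exact hrz (by rw [h0]; ring))]
        ring
    _ = t⁻¹ ^ r * (1 - q ^ r) * ((↑(zWeight μ.parts))⁻¹ * (μ.parts.map x).prod) := by
        rw [hx]; ring

lemma FF_eq (q t : ℝ) : ∀ n : ℕ, 1 ≤ n → FF q t n = t⁻¹ ^ n * (1 - q) := by
  intro n
  induction n using Nat.strong_induction_on with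
  | _ n ih =>
    intro hn
    obtain ⟨m, rfl⟩ : ∃ m, n = m + 1 := ⟨n - 1, by omega⟩
    have hrec := FF_rec q t (m + 1)
    rw [Finset.sum_Icc_succ_top (by omega : 1 ≤ m + 1)] at hrec
    rw [Nat.sub_self, FF_zero] at hrec
    have hsum : ∑ r ∈ Finset.Icc 1 m, (t⁻¹ ^ r * (1 - q ^ r)) * FF q t (m + 1 - r)
        = ∑ r ∈ Finset.Icc 1 m, t⁻¹ ^ (m+1) * ((1 - q ^ r) * (1 - q)) := by
      refine Finset.sum_congr rfl (fun r hr => ?_)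
      obtain ⟨h1, h2⟩ := Finset.mem_Icc.1 hr
      rw [ih (m + 1 - r) (by omega) (by omega)]
      rw [show t⁻¹ ^ r * (1 - q ^ r) * (t⁻¹ ^ (m + 1 - r) * (1 - q))
          = (t⁻¹ ^ r * t⁻¹ ^ (m + 1 - r)) * ((1 - q ^ r) * (1 - q)) by ring,
        ← pow_add, Nat.add_sub_cancel' (by omega : r ≤ m + 1)]
    rw [hsum] at hrec
    -- evaluate the geometric-type sum
    have hgeom : (∑ r ∈ Finset.Icc 1 m, q ^ r) * (q - 1) = q ^ (m + 1) - q := by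
      have h1 : ∑ r ∈ Finset.Icc 1 m, q ^ r = ∑ i ∈ Finset.range m, q ^ (1 + i) := by
        rw [← Finset.Ico_add_one_right_eq_Icc, Finset.sum_Ico_eq_sum_range]
        simp
      have h2 : ∑ i ∈ Finset.range m, q ^ (1 + i) = q * ∑ i ∈ Finset.range m, q ^ i := by
        rw [Finset.mul_sum]
        exact Finset.sum_congr rfl (fun i _ => by rw [pow_add, pow_one])
      rw [h1, h2, mul_assoc, geom_sum_mul]
      ring
    have hS : ∑ r ∈ Finset.Icc 1 m, t⁻¹ ^ (m+1) * ((1 - q ^ r) * (1 - q))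
        = t⁻¹ ^ (m+1) * ((1 - q) * m - (q - q ^ (m+1))) := by
      rw [← Finset.mul_sum]
      congr 1
      have expand : ∑ r ∈ Finset.Icc 1 m, (1 - q ^ r) * (1 - q)
          = (∑ r ∈ Finset.Icc 1 m, (1:ℝ)) * (1 - q)
            - (∑ r ∈ Finset.Icc 1 m, q ^ r) * (1 - q) := by
        calc ∑ r ∈ Finset.Icc 1 m, (1 - q ^ r) * (1 - q)
            = ∑ r ∈ Finset.Icc 1 m, ((1:ℝ) * (1 - q) - q ^ r * (1 - q)) :=
              Finset.sum_congr rfl (fun r _ => by ring)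
          _ = ∑ r ∈ Finset.Icc 1 m, (1:ℝ) * (1 - q)
                - ∑ r ∈ Finset.Icc 1 m, q ^ r * (1 - q) := Finset.sum_sub_distrib _ _
          _ = _ := by rw [← Finset.sum_mul, ← Finset.sum_mul]
      rw [expand, Finset.sum_const, Nat.card_Icc]
      have : (∑ r ∈ Finset.Icc 1 m, q ^ r) * (1 - q) = -(q ^ (m+1) - q) := by
        rw [show (1 - q) = -(q - 1) by ring, mul_neg, hgeom]
      rw [this]
      simp only [Nat.add_sub_cancel, nsmul_eq_mul, mul_one]
      ring
    rw [hS] at hrec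
    have hm1 : ((m : ℝ) + 1) ≠ 0 := by positivity
    have target : ((m + 1 : ℕ) : ℝ) * FF q t (m + 1)
        = ((m + 1 : ℕ) : ℝ) * (t⁻¹ ^ (m + 1) * (1 - q)) := by
      rw [hrec]
      push_cast
      ring
    have := mul_left_cancel₀ (by push_cast; exact hm1 : ((m + 1 : ℕ) : ℝ) ≠ 0) target
    exact this

lemma one_sub_t_pow_ne (t : ℝ) (ht : 1 < t) (p : ℕ) (hp : 1 ≤ p) : (1 : ℝ) - t ^ p ≠ 0 := by
  have : (1:ℝ) < t ^ p := one_lt_pow₀ ht (by omega)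
  intro h; linarith

lemma inner_sum_eval (q t : ℝ) (ht : 1 < t) (k : ℕ) (κ : Multiset ℕ)
    (hκpos : ∀ x ∈ κ, 0 < x) (hκk : κ.sum < k) :
    (∑ ν : Nat.Partition k, if κ ≤ ν.parts then
        piInf t (ν.parts - κ) * ((-1 : ℝ) ^ (k - Multiset.card ν.parts) *
          (ν.parts.map (fun p => (1 - q ^ p) / (1 - t ^ p))).prod) else 0)
      = (t / (t - 1)) * (1 - q) * t⁻¹ ^ (k - κ.sum) *
          ((-1 : ℝ) ^ k * ((-1 : ℝ) ^ (Multiset.card κ) *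
            (κ.map (fun p => (1 - q ^ p) / (1 - t ^ p))).prod)) := by
  classical
  have ht0 : t ≠ 0 := by linarith
  set g : ℕ → ℝ := fun p => (1 - q ^ p) / (1 - t ^ p) with hg
  set x : ℕ → ℝ := fun p => t⁻¹ ^ p * (1 - q ^ p) with hx
  have hbij := sum_partition_sub k κ hκpos (le_of_lt hκk)
    (fun m => piInf t (m - κ) * ((-1 : ℝ) ^ (k - Multiset.card m) * (m.map g).prod))
  rw [hbij]
  set m := k - κ.sum with hm
  have hm1 : 1 ≤ m := by omega
  have hterm : ∀ μ : Nat.Partition m,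
      piInf t ((μ.parts + κ) - κ) * ((-1 : ℝ) ^ (k - Multiset.card (μ.parts + κ)) *
        ((μ.parts + κ).map g).prod)
      = ((t / (t - 1)) * ((-1 : ℝ) ^ k * ((-1 : ℝ) ^ (Multiset.card κ) * (κ.map g).prod))) *
          (((zWeight μ.parts : ℝ))⁻¹ * (μ.parts.map x).prod) := by
    intro μ
    have hsub : (μ.parts + κ) - κ = μ.parts := by simp
    have hcardμ : Multiset.card μ.parts ≤ m := by
      have := multiset_card_le_sum μ.parts (fun y hy => μ.parts_pos hy)
      rw [μ.parts_sum] at this; exact this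
    have hcardκ : Multiset.card κ ≤ κ.sum :=
      multiset_card_le_sum κ (fun y hy => hκpos y hy)
    have hcards : Multiset.card μ.parts + Multiset.card κ ≤ k := by omega
    rw [hsub, Multiset.card_add, Multiset.map_add, Multiset.prod_add]
    rw [neg_one_pow_sub k _ hcards, pow_add]
    rw [piInf]
    -- fuse the three products over μ.parts
    have hfuse : (μ.parts.map (fun p => 1 - t⁻¹ ^ p)).prod * ((-1 : ℝ) ^ Multiset.card μ.parts *
        (μ.parts.map g).prod) = (μ.parts.map x).prod := by
      have hconst : ((-1 : ℝ)) ^ Multiset.card μ.parts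
          = (μ.parts.map (fun _ => (-1 : ℝ))).prod := by
        rw [Multiset.map_const', Multiset.prod_replicate]
      rw [hconst, ← Multiset.prod_map_mul, ← Multiset.prod_map_mul]
      refine congrArg Multiset.prod (Multiset.map_congr rfl (fun p hp => ?_))
      have hp1 : 1 ≤ p := μ.parts_pos hp
      have h2 : (1:ℝ) - t ^ p ≠ 0 := one_sub_t_pow_ne t ht p hp1
      rw [hg, hx]
      simp only
      field_simp
      have htp : t ^ p * t⁻¹ ^ p = 1 := by rw [← mul_pow, mul_inv_cancel₀ ht0, one_pow]
      linear_combination (1 - q ^ p) * htp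
    calc t / (t - 1) * (↑(zWeight μ.parts))⁻¹ * (μ.parts.map (fun p => 1 - t⁻¹ ^ p)).prod *
          ((-1 : ℝ) ^ k * ((-1 : ℝ) ^ Multiset.card μ.parts * (-1 : ℝ) ^ Multiset.card κ) *
            ((μ.parts.map g).prod * (κ.map g).prod))
        = (t / (t - 1) * ((-1 : ℝ) ^ k * ((-1 : ℝ) ^ Multiset.card κ * (κ.map g).prod))) *
            ((↑(zWeight μ.parts))⁻¹ *
              ((μ.parts.map (fun p => 1 - t⁻¹ ^ p)).prod *
                ((-1 : ℝ) ^ Multiset.card μ.parts * (μ.parts.map g).prod))) := by ring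
      _ = _ := by rw [hfuse]
  rw [Finset.sum_congr rfl (fun μ _ => hterm μ), ← Finset.mul_sum]
  have hFF : (∑ μ : Nat.Partition m, ((zWeight μ.parts : ℝ))⁻¹ * (μ.parts.map x).prod)
      = FF q t m := rfl
  rw [hFF, FF_eq q t m hm1]
  ring

lemma prod_map_pow_sum (t : ℝ) (m : Multiset ℕ) :
    (m.map (fun p => t ^ p)).prod = t ^ m.sum := by
  induction m using Multiset.induction_on with
  | empty => simp
  | cons a s ih => simp [pow_add, ih]

lemma inv_pow_sub_eq (t : ℝ) (ht0 : t ≠ 0) (a b : ℕ) (h : b ≤ a) :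
    t⁻¹ ^ (a - b) = t⁻¹ ^ a * t ^ b := by
  have h1 : t⁻¹ ^ (a - b) * t⁻¹ ^ b = t⁻¹ ^ a := by
    rw [← pow_add, Nat.sub_add_cancel h]
  have h2 : t⁻¹ ^ b * t ^ b = 1 := by
    rw [← mul_pow, inv_mul_cancel₀ ht0, one_pow]
  calc t⁻¹ ^ (a - b) = t⁻¹ ^ (a - b) * (t⁻¹ ^ b * t ^ b) := by rw [h2, mul_one]
    _ = (t⁻¹ ^ (a - b) * t⁻¹ ^ b) * t ^ b := by ring
    _ = t⁻¹ ^ a * t ^ b := by rw [h1]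

/-- The function `f(ρ) = (-1)^{k-ℓ(ρ)} ∏_j (1-q^{ρ_j})/(1-t^{ρ_j})` is a right eigenfunction
of the auxiliary variables kernel with eigenvalue `(q-1)(1-t^{-k})/((q^k-1)(1-t^{-1}))`. -/
theorem auxM_eigenfunction_one_column
    (q t : ℝ) (hq : 1 < q) (ht : 1 < t) (k : ℕ) (hk : 1 ≤ k) :
    ∀ ρ : Nat.Partition k,
      (∑ ν : Nat.Partition k, auxM q t k ρ ν *
          ((-1 : ℝ) ^ (k - Multiset.card ν.parts) *
            (ν.parts.map (fun p => (1 - q ^ p) / (1 - t ^ p))).prod)) =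
        ((q - 1) * (1 - t⁻¹ ^ k)) / ((q ^ k - 1) * (1 - t⁻¹)) *
          ((-1 : ℝ) ^ (k - Multiset.card ρ.parts) *
            (ρ.parts.map (fun p => (1 - q ^ p) / (1 - t ^ p))).prod) := by
  intro ρ
  classical
  set g : ℕ → ℝ := fun p => (1 - q ^ p) / (1 - t ^ p) with hg
  set s : Multiset ℕ := ρ.parts with hs
  set B : Finset (Multiset ℕ) := s.powerset.toFinset with hB
  have ht0 : t ≠ 0 := by linarith
  have ht1 : t - 1 ≠ 0 := by intro h; linarith
  have hqk : q ^ k - 1 ≠ 0 := by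
    have : (1:ℝ) < q ^ k := one_lt_pow₀ hq (by omega)
    intro h; linarith
  have hspos : ∀ x ∈ s, 0 < x := fun x hx => ρ.parts_pos hx
  have hssum : s.sum = k := ρ.parts_sum
  have hsubIcc : s.toFinset ⊆ Finset.Icc 1 k := parts_toFinset_subset k ρ
  have hcards : Multiset.card s ≤ k := by
    have := multiset_card_le_sum s (fun y hy => hspos y hy)
    omega
  -- the per-κ constant and weight functions
  set u : ℕ → ℝ := fun p => q ^ p - 1 with hu
  set v : ℕ → ℝ := fun p => t ^ p * (-1) * g p with hv
  set hh : Multiset ℕ → ℝ := fun κ => (κ.map v).prod * ((s - κ).map u).prod with hhh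
  set CC : ℝ := (q ^ k - 1)⁻¹ * ((t / (t - 1)) * (1 - q) * (-1 : ℝ) ^ k * t⁻¹ ^ k) with hCC
  set W : Multiset ℕ → ℝ := fun κ => wKeep q k s κ *
    ((t / (t - 1)) * (1 - q) * t⁻¹ ^ (k - κ.sum) *
      ((-1 : ℝ) ^ k * ((-1 : ℝ) ^ (Multiset.card κ) * (κ.map g).prod))) with hWdef
  -- Step 1: swap the sums
  have hswap : (∑ ν : Nat.Partition k, auxM q t k ρ ν *
        ((-1 : ℝ) ^ (k - Multiset.card ν.parts) * (ν.parts.map g).prod))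
      = ∑ κ ∈ B, ∑ ν : Nat.Partition k,
          (if κ ≤ ν.parts ∧ κ ≠ s then
            wKeep q k s κ * (piInf t (ν.parts - κ) *
              ((-1 : ℝ) ^ (k - Multiset.card ν.parts) * (ν.parts.map g).prod)) else 0) := by
    rw [← Finset.sum_comm]
    refine Finset.sum_congr rfl (fun ν _ => ?_)
    rw [auxM, Finset.sum_mul, Finset.sum_filter]
    refine Finset.sum_congr rfl (fun κ _ => ?_)
    split_ifs with h
    · ring
    · rfl
  -- strict sum inequality for proper sub-multisets
  have hlt : ∀ κ : Multiset ℕ, κ ≤ s → κ ≠ s → κ.sum < k := by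
    intro κ hle hne
    have hdecomp : κ + (s - κ) = s := add_tsub_cancel_of_le hle
    have hsum : κ.sum + (s - κ).sum = k := by
      rw [← Multiset.sum_add, hdecomp, hssum]
    rcases Nat.lt_or_ge κ.sum k with h | h
    · exact h
    · exfalso
      have hzero : (s - κ).sum = 0 := by omega
      have hd0 : s - κ = 0 := by
        by_contra hne0
        obtain ⟨a, ha⟩ := Multiset.exists_mem_of_ne_zero hne0
        have hqa : 0 < a := hspos a (Multiset.mem_of_le (Multiset.sub_le_self _ _) ha)
        have : a ≤ (s - κ).sum := Multiset.single_le_sum (fun y _ => Nat.zero_le y) a ha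
        omega
      have : κ = s := by rw [← hdecomp, hd0, add_zero]
      exact hne this
  -- Step 2: evaluate inner sums
  have hinner : ∀ κ ∈ B, (∑ ν : Nat.Partition k,
        (if κ ≤ ν.parts ∧ κ ≠ s then
          wKeep q k s κ * (piInf t (ν.parts - κ) *
            ((-1 : ℝ) ^ (k - Multiset.card ν.parts) * (ν.parts.map g).prod)) else 0))
      = if κ = s then 0 else W κ := by
    intro κ hκ
    have hκle : κ ≤ s := Multiset.mem_powerset.1 (Multiset.mem_toFinset.1 hκ)
    by_cases hne : κ = s
    · rw [if_pos hne]
      refine Finset.sum_eq_zero (fun ν _ => ?_)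
      rw [if_neg (by tauto)]
    · rw [if_neg hne]
      have hsplit : ∀ ν : Nat.Partition k,
          (if κ ≤ ν.parts ∧ κ ≠ s then
            wKeep q k s κ * (piInf t (ν.parts - κ) *
              ((-1 : ℝ) ^ (k - Multiset.card ν.parts) * (ν.parts.map g).prod)) else 0)
          = wKeep q k s κ * (if κ ≤ ν.parts then
              (piInf t (ν.parts - κ) *
                ((-1 : ℝ) ^ (k - Multiset.card ν.parts) * (ν.parts.map g).prod)) else 0) := by
        intro ν
        by_cases h : κ ≤ ν.parts
        · rw [if_pos ⟨h, hne⟩, if_pos h]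
        · rw [if_neg (by tauto), if_neg h, mul_zero]
      rw [Finset.sum_congr rfl (fun ν _ => hsplit ν), ← Finset.mul_sum]
      rw [inner_sum_eval q t ht k κ (fun x hx => hspos x (Multiset.mem_of_le hκle hx))
        (hlt κ hκle hne)]
  rw [hswap, Finset.sum_congr rfl hinner]
  -- generic fusion of the v-product
  have hvprod : ∀ κ : Multiset ℕ, (κ.map v).prod
      = t ^ κ.sum * ((-1 : ℝ) ^ (Multiset.card κ) * (κ.map g).prod) := by
    intro κ
    calc (κ.map v).prod
        = (κ.map (fun p => (t ^ p) * ((fun _ => (-1:ℝ)) p * g p))).prod := by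
          refine congrArg Multiset.prod (Multiset.map_congr rfl fun p _ => by rw [hv]; ring)
      _ = (κ.map (fun p => t ^ p)).prod *
            (κ.map (fun p => (fun _ => (-1:ℝ)) p * g p)).prod := Multiset.prod_map_mul
      _ = (κ.map (fun p => t ^ p)).prod *
            ((κ.map (fun _ => (-1:ℝ))).prod * (κ.map g).prod) := by rw [Multiset.prod_map_mul]
      _ = t ^ κ.sum * ((-1 : ℝ) ^ (Multiset.card κ) * (κ.map g).prod) := by
          rw [prod_map_pow_sum, Multiset.map_const', Multiset.prod_replicate]
  -- Step 3: per-κ closed form of W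
  have hWid : ∀ κ ∈ B, W κ = CC * ((s.powerset.count κ : ℝ) * hh κ) := by
    intro κ hκ
    have hκle : κ ≤ s := Multiset.mem_powerset.1 (Multiset.mem_toFinset.1 hκ)
    have hκsub : κ.toFinset ⊆ Finset.Icc 1 k := fun i hi =>
      hsubIcc (Multiset.mem_toFinset.2 (Multiset.mem_of_le hκle (Multiset.mem_toFinset.1 hi)))
    have hsκsub : (s - κ).toFinset ⊆ Finset.Icc 1 k := fun i hi =>
      hsubIcc (Multiset.mem_toFinset.2
        (Multiset.mem_of_le (Multiset.sub_le_self _ _) (Multiset.mem_toFinset.1 hi)))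
    have hκsum : κ.sum ≤ k := by
      have hdecomp : κ + (s - κ) = s := add_tsub_cancel_of_le hκle
      have : κ.sum + (s - κ).sum = k := by rw [← Multiset.sum_add, hdecomp, hssum]
      omega
    have hchoose : (∏ i ∈ Finset.Icc 1 k, ((s.count i).choose (κ.count i) : ℝ))
        = (s.powerset.count κ : ℝ) := by
      rw [count_powerset s κ (Finset.Icc 1 k) hsubIcc hκsub]
      exact (Nat.cast_prod _ _).symm
    have hpow : (∏ i ∈ Finset.Icc 1 k, ((q ^ i - 1) ^ (s.count i - κ.count i) : ℝ))
        = ((s - κ).map u).prod := by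
      have hcnt : ∀ i ∈ Finset.Icc 1 k, ((q ^ i - 1) ^ (s.count i - κ.count i) : ℝ)
          = u i ^ ((s - κ).count i) := by
        intro i _
        rw [Multiset.count_sub, hu]
      rw [Finset.prod_congr rfl hcnt]
      exact prod_pow_count (s - κ) (Finset.Icc 1 k) hsκsub u
    have hwk : wKeep q k s κ = (q ^ k - 1)⁻¹ *
        ((s.powerset.count κ : ℝ) * ((s - κ).map u).prod) := by
      rw [wKeep, Finset.prod_mul_distrib, hchoose, hpow]
    have hinvpow : t⁻¹ ^ (k - κ.sum) = t⁻¹ ^ k * t ^ κ.sum :=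
      inv_pow_sub_eq t ht0 k κ.sum hκsum
    rw [hWdef]
    simp only
    rw [hwk, hinvpow, hhh]
    simp only
    rw [hvprod κ]
    rw [hCC]
    ring
  -- Step 4: split the sum at κ = s
  have hsB : s ∈ B := Multiset.mem_toFinset.2 (Multiset.mem_powerset.2 le_rfl)
  have hstep : ∑ κ ∈ B, (if κ = s then (0:ℝ) else W κ) = (∑ κ ∈ B, W κ) - W s := by
    have hsplit2 : ∀ κ ∈ B, (if κ = s then (0:ℝ) else W κ)
        = W κ - (if κ = s then W κ else 0) := fun κ _ => by split_ifs <;> ring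
    rw [Finset.sum_congr rfl hsplit2, Finset.sum_sub_distrib,
      Finset.sum_ite_eq' B s W, if_pos hsB]
  rw [hstep]
  -- Step 5: total sum over the powerset
  have hsum_all : ∑ κ ∈ B, W κ = CC * (s.map (fun p => -(g p))).prod := by
    rw [Finset.sum_congr rfl hWid, ← Finset.mul_sum]
    congr 1
    have h1 : (s.powerset.map hh).sum = ∑ κ ∈ B, (s.powerset.count κ) • hh κ :=
      Finset.sum_multiset_map_count _ _
    have h2 : ∑ κ ∈ B, ((s.powerset.count κ : ℝ) * hh κ)
        = ∑ κ ∈ B, (s.powerset.count κ) • hh κ :=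
      Finset.sum_congr rfl (fun κ _ => (nsmul_eq_mul _ _).symm)
    rw [h2, ← h1, hhh]
    rw [powerset_weighted_sum u v s]
    refine congrArg Multiset.prod (Multiset.map_congr rfl fun p hp => ?_)
    have hp1 : 1 ≤ p := hspos p hp
    have h2t : (1:ℝ) - t ^ p ≠ 0 := one_sub_t_pow_ne t ht p hp1
    rw [hu, hv, hg]
    simp only
    field_simp
    ring
  -- Step 6: the removed term at κ = s
  have hWs : W s = CC * (t ^ k * ((-1 : ℝ) ^ (Multiset.card s) * (s.map g).prod)) := by
    rw [hWid s hsB]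
    have hNs : (s.powerset.count s : ℝ) = 1 := by
      rw [count_powerset s s (Finset.Icc 1 k) hsubIcc hsubIcc]
      rw [Finset.prod_congr rfl (fun i _ => Nat.choose_self (s.count i))]
      simp
    have hhs : hh s = t ^ k * ((-1 : ℝ) ^ (Multiset.card s) * (s.map g).prod) := by
      rw [hhh]
      simp only
      rw [tsub_self, Multiset.map_zero, Multiset.prod_zero, mul_one, hvprod s, hssum]
    rw [hNs, hhs, one_mul]
  rw [hsum_all, hWs]
  -- Step 7: final algebra
  have hnegprod : (s.map (fun p => -(g p))).prod
      = (-1 : ℝ) ^ (Multiset.card s) * (s.map g).prod := by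
    calc (s.map (fun p => -(g p))).prod
        = (s.map (fun p => (fun _ => (-1:ℝ)) p * g p)).prod := by
          refine congrArg Multiset.prod (Multiset.map_congr rfl fun p _ => by ring)
      _ = (s.map (fun _ => (-1:ℝ))).prod * (s.map g).prod := Multiset.prod_map_mul
      _ = (-1 : ℝ) ^ (Multiset.card s) * (s.map g).prod := by
          rw [Multiset.map_const', Multiset.prod_replicate]
  rw [hnegprod, neg_one_pow_sub k (Multiset.card s) hcards]
  have h1t : (1:ℝ) - t⁻¹ ≠ 0 := by
    have he : (1:ℝ) - t⁻¹ = (t - 1) / t := by field_simp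
    rw [he]
    exact div_ne_zero ht1 ht0
  have key : CC * (1 - t ^ k) = ((q - 1) * (1 - t⁻¹ ^ k)) / ((q ^ k - 1) * (1 - t⁻¹)) *
      (-1 : ℝ) ^ k := by
    rw [hCC, inv_pow]
    have htk : (t : ℝ) ^ k ≠ 0 := pow_ne_zero k ht0
    field_simp
    ring
  calc CC * ((-1 : ℝ) ^ (Multiset.card s) * (s.map g).prod)
        - CC * (t ^ k * ((-1 : ℝ) ^ (Multiset.card s) * (s.map g).prod))
      = (CC * (1 - t ^ k)) * ((-1 : ℝ) ^ (Multiset.card s) * (s.map g).prod) := by ring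
    _ = _ := by rw [key]; ring
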